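/- For every n ≥ 1 and every invertible matrix A ∈ GL_n(ℂ), there exists a C-flow φ of A such that for each pair of indices (i,j) the entry function z ↦ φ(z)_{ij} is analytic (differentiable) on all of ℂ. -/

import Mathlib

open NormedSpace Finset

set_option linter.unusedSectionVars false

section NilpotentLog

variable {𝔸 : Type*} [NormedRing 𝔸] [NormedAlgebra ℂ 𝔸] [CompleteSpace 𝔸]

/-- exp of an element with `x ^ m = 0` is the finite sum. -/
lemma exp_eq_sum_of_pow_eq_zero {x : 𝔸} {m : ℕ} (hm : x ^ m = 0) :
    exp x = ∑ j ∈ range (m + 1), ((j.factorial : ℂ)⁻¹) • x ^ j := by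
  rw [exp_eq_tsum ℂ]
  refine tsum_eq_sum ?_
  intro j hj
  have hml : m ≤ j := by simp only [mem_range, not_lt] at hj; omega
  rw [pow_eq_zero_of_le hml hm, smul_zero]

lemma exp_nilpotent_log {N : 𝔸} {m : ℕ} (hm : N ^ m = 0) :
    exp (∑ k ∈ range m, (((-1 : ℂ) ^ k / (k + 1)) • N ^ (k + 1))) = 1 + N := by
  classical
  -- the commutative subalgebra generated by N
  set S := Algebra.adjoin ℂ {N} with hS
  have hNS : N ∈ S := Algebra.self_mem_adjoin_singleton ℂ N
  have hcomm : ∀ x ∈ S, ∀ y ∈ S, Commute x y := by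
    intro x hx y hy
    refine Algebra.commute_of_mem_adjoin_singleton_of_commute hy ?_
    exact (Algebra.commute_of_mem_adjoin_self hx).symm
  -- the functions
  set g : ℂ → 𝔸 := fun t => -∑ k ∈ range m, (((-1 : ℂ) ^ k * t ^ (k + 1) / (k + 1)) • N ^ (k + 1))
    with hg
  set gd : ℂ → 𝔸 := fun t => -∑ k ∈ range m, (((-1 : ℂ) ^ k * t ^ k) • N ^ (k + 1)) with hgd
  set e : ℂ → 𝔸 := fun t => ∑ j ∈ range (m + 1), ((j.factorial : ℂ)⁻¹) • g t ^ j with he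
  -- memberships
  have hgS : ∀ t, g t ∈ S := fun t =>
    neg_mem (sum_mem fun k _ => Subalgebra.smul_mem S (pow_mem hNS _) _)
  have hgdS : ∀ t, gd t ∈ S := fun t =>
    neg_mem (sum_mem fun k _ => Subalgebra.smul_mem S (pow_mem hNS _) _)
  have heS : ∀ t, e t ∈ S := fun t =>
    sum_mem fun j _ => Subalgebra.smul_mem S (pow_mem (hgS t) _) _
  -- g t ^ m = 0
  have hgm : ∀ t, g t ^ m = 0 := by
    intro t
    have hfac : g t = N * (-∑ k ∈ range m, (((-1 : ℂ) ^ k * t ^ (k + 1) / (k + 1)) • N ^ k)) := by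
      rw [hg, mul_neg, neg_inj, mul_sum]
      refine sum_congr rfl fun k _ => ?_
      rw [mul_smul_comm, ← pow_succ']
    have hQ : (-∑ k ∈ range m, (((-1 : ℂ) ^ k * t ^ (k + 1) / (k + 1)) • N ^ k)) ∈ S :=
      neg_mem (sum_mem fun k _ => Subalgebra.smul_mem S (pow_mem hNS _) _)
    rw [hfac, (hcomm N hNS _ hQ).mul_pow, hm, zero_mul]
  -- derivative of g
  have hgderiv : ∀ t, HasDerivAt g (gd t) t := by
    intro t
    rw [hg, hgd]
    refine HasDerivAt.neg (HasDerivAt.fun_sum fun k _ => ?_)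
    have h1 : HasDerivAt (fun t : ℂ => (-1 : ℂ) ^ k * t ^ (k + 1) / (k + 1))
        ((-1 : ℂ) ^ k * t ^ k) t := by
      have := ((hasDerivAt_pow (k + 1) t).const_mul ((-1 : ℂ) ^ k)).div_const ((k : ℂ) + 1)
      refine this.congr_deriv ?_
      have hk : ((k : ℂ) + 1) ≠ 0 := by exact_mod_cast Nat.succ_ne_zero k
      rw [Nat.add_sub_cancel]; push_cast
      field_simp
    simpa using h1.smul_const (N ^ (k + 1))
  -- telescoping: gd t * (1 + t • N) = -N
  have htel : ∀ t : ℂ, gd t * (1 + t • N) = -N := by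
    intro t
    rw [hgd, neg_mul, neg_eq_iff_eq_neg, neg_neg, sum_mul]
    have hterm : ∀ k ∈ range m,
        (((-1 : ℂ) ^ k * t ^ k) • N ^ (k + 1)) * (1 + t • N)
          = (fun k => ((-1 : ℂ) ^ k * t ^ k) • N ^ (k + 1)) k
            - (fun k => ((-1 : ℂ) ^ k * t ^ k) • N ^ (k + 1)) (k + 1) := by
      intro k _
      simp only
      rw [smul_mul_assoc, mul_add, mul_one, mul_smul_comm, ← pow_succ, smul_add, smul_smul,
        sub_eq_add_neg, ← neg_smul]
      congr 2
      ring
    rw [sum_congr rfl hterm, sum_range_sub']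
    simp only [pow_zero, one_mul, one_smul, zero_add, pow_one]
    have : N ^ (m + 1) = 0 := pow_eq_zero_of_le (Nat.le_succ m) hm
    rw [this, smul_zero, sub_zero]
  -- derivative of powers of g
  have hpow : ∀ (j : ℕ) (t : ℂ), HasDerivAt (fun t => g t ^ j)
      ((j : ℂ) • (gd t * g t ^ (j - 1))) t := by
    intro j
    induction j with
    | zero => intro t; simpa using hasDerivAt_const t (1 : 𝔸)
    | succ i ih =>
      intro t
      have h1 : HasDerivAt (fun t => g t ^ i * g t)
          (((i : ℂ) • (gd t * g t ^ (i - 1))) * g t + g t ^ i * gd t) t :=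
        (ih t).mul (hgderiv t)
      have h2 : (fun t => g t ^ i * g t) = fun t => g t ^ (i + 1) := by
        funext t; rw [pow_succ]
      rw [h2] at h1
      convert h1 using 1
      rcases Nat.eq_zero_or_pos i with hi | hi
      · subst hi; simp
      · obtain ⟨i', rfl⟩ := Nat.exists_eq_succ_of_ne_zero hi.ne'
        have hcg : g t ^ (i' + 1) * gd t = gd t * g t ^ (i' + 1) :=
          (hcomm _ (hgdS t) _ (pow_mem (hgS t) _)).symm.eq
        rw [hcg, smul_mul_assoc, mul_assoc, Nat.succ_sub_one, ← pow_succ]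
        rw [Nat.succ_sub_one]
        push_cast
        rw [add_smul, one_smul]
  -- derivative of e
  have hederiv : ∀ t, HasDerivAt e (gd t * e t) t := by
    intro t
    have h1 : HasDerivAt e
        (∑ j ∈ range (m + 1), ((j.factorial : ℂ)⁻¹) • ((j : ℂ) • (gd t * g t ^ (j - 1)))) t := by
      rw [he]
      exact HasDerivAt.fun_sum fun j _ => (hpow j t).fun_const_smul _
    convert h1 using 1
    rw [sum_range_succ']
    simp only [Nat.cast_zero, zero_smul, smul_zero, add_zero]
    have hrhs : gd t * e t = ∑ j ∈ range (m + 1), ((j.factorial : ℂ)⁻¹) • (gd t * g t ^ j) := by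
      rw [he, mul_sum]
      exact sum_congr rfl fun j _ => (mul_smul_comm _ _ _)
    rw [hrhs, sum_range_succ]
    have hz : gd t * g t ^ m = 0 := by rw [hgm t, mul_zero]
    rw [hz, smul_zero, add_zero]
    refine sum_congr rfl fun i _ => ?_
    rw [smul_smul, Nat.add_sub_cancel]
    congr 1
    rw [Nat.factorial_succ]
    push_cast
    have h0 : ((i : ℂ) + 1) ≠ 0 := by exact_mod_cast Nat.succ_ne_zero i
    have h0' : ((i.factorial : ℂ)) ≠ 0 := by exact_mod_cast Nat.cast_ne_zero.mpr i.factorial_ne_zero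
    field_simp
  -- h is constant
  set h : ℂ → 𝔸 := fun t => e t * (1 + t • N) with hh
  have hhd : ∀ t, HasDerivAt h 0 t := by
    intro t
    have h2 : HasDerivAt (fun t : ℂ => 1 + t • N) N t := by
      simpa using ((hasDerivAt_id t).smul_const N).const_add (1 : 𝔸)
    have h3 := (hederiv t).mul h2
    convert h3 using 1
    · rfl
    have hc1 : gd t * e t = e t * gd t := (hcomm _ (hgdS t) _ (heS t)).eq
    rw [hc1, mul_assoc, htel t, mul_neg, neg_add_cancel]
  have hconst : h 1 = h 0 :=
    is_const_of_deriv_eq_zero (fun t => (hhd t).differentiableAt)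
      (fun t => (hhd t).deriv) 1 0
  have hgeval : ∀ t, g t = -∑ k ∈ range m, (((-1 : ℂ) ^ k * t ^ (k + 1) / (k + 1)) • N ^ (k + 1)) :=
    fun t => rfl
  have heval : ∀ t, e t = ∑ j ∈ range (m + 1), ((j.factorial : ℂ)⁻¹) • g t ^ j := fun t => rfl
  have hg0 : g 0 = 0 := by
    rw [hgeval 0]
    simp
  have he0 : e 0 = 1 := by
    rw [heval 0, hg0]
    rw [Finset.sum_eq_single 0]
    · simp
    · intro j _ hj
      rw [zero_pow hj, smul_zero]
    · simp
  have hh0 : h 0 = 1 := by rw [hh]; simp [he0]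
  have hkey : e 1 * (1 + N) = 1 := by
    have := hconst.trans hh0
    rw [hh] at this
    simpa using this
  -- identify e 1 with exp (g 1) = exp (-L)
  set L : 𝔸 := ∑ k ∈ range m, (((-1 : ℂ) ^ k / (k + 1)) • N ^ (k + 1)) with hL
  have hg1 : g 1 = -L := by
    rw [hgeval 1, hL, neg_inj]
    exact sum_congr rfl fun k _ => by rw [one_pow, mul_one]
  have he1 : e 1 = exp (-L) := by
    rw [heval 1, hg1, ← exp_eq_sum_of_pow_eq_zero (x := -L) (m := m) (by rw [← hg1, hgm 1])]
  have hexp : exp L * exp (-L) = 1 := by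
    letI : NormedAlgebra ℚ 𝔸 := NormedAlgebra.restrictScalars ℚ ℂ 𝔸
    rw [← exp_add_of_commute (Commute.neg_right (Commute.refl L)), add_neg_cancel, exp_zero]
  calc exp L = exp L * (e 1 * (1 + N)) := by rw [hkey, mul_one]
    _ = (exp L * exp (-L)) * (1 + N) := by rw [he1, mul_assoc]
    _ = 1 + N := by rw [hexp, one_mul]

end NilpotentLog



/-- Flow of a diagonalizable endomorphism given an eigenbasis. -/
lemma flow_of_eigenbasis {n : ℕ} (s : Module.End ℂ (Fin n → ℂ))
    (b : Module.Basis (Fin n) ℂ (Fin n → ℂ)) (μ : Fin n → ℂ)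
    (hμ : ∀ i, s (b i) = μ i • b i) (hμ0 : ∀ i, μ i ≠ 0) :
    ∃ σ : ℂ → Module.End ℂ (Fin n → ℂ),
      (∀ z w, σ (z + w) = σ z * σ w) ∧ σ 0 = 1 ∧ σ 1 = s ∧
      (∀ g : Module.End ℂ (Fin n → ℂ), Commute s g → ∀ z, Commute (σ z) g) ∧
      (∀ z, σ z = ∑ i, Complex.exp (z * Complex.log (μ i)) •
        (LinearMap.toSpanSingleton ℂ _ (b i) ∘ₗ (b.coord i))) := by
  classical
  set E : Fin n → Module.End ℂ (Fin n → ℂ) :=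
    fun i => LinearMap.toSpanSingleton ℂ _ (b i) ∘ₗ (b.coord i) with hE
  set σ : ℂ → Module.End ℂ (Fin n → ℂ) :=
    fun z => ∑ i, Complex.exp (z * Complex.log (μ i)) • E i with hσ
  have hEapply : ∀ i v, E i v = b.repr v i • b i := fun i v => rfl
  have hevalb : ∀ z j, σ z (b j) = Complex.exp (z * Complex.log (μ j)) • b j := by
    intro z j
    rw [hσ]
    simp only [LinearMap.sum_apply, LinearMap.smul_apply]
    rw [Finset.sum_eq_single j]
    · rw [hEapply, Module.Basis.repr_self, Finsupp.single_eq_same, one_smul]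
    · intro i _ hij
      rw [hEapply, Module.Basis.repr_self, Finsupp.single_apply, if_neg hij.symm]
      simp
    · simp
  have hevalv : ∀ (z : ℂ) (μ₀ : ℂ) (v : Fin n → ℂ), s v = μ₀ • v →
      σ z v = Complex.exp (z * Complex.log μ₀) • v := by
    intro z μ₀ v hv
    have hrepr : v = ∑ i, b.repr v i • b i := (b.sum_repr v).symm
    have hcoord : ∀ i, b.repr v i * μ i = b.repr v i * μ₀ := by
      intro i
      have h1 : s v = ∑ j, (b.repr v j * μ j) • b j := by
        conv_lhs => rw [hrepr]
        rw [map_sum]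
        exact Finset.sum_congr rfl fun j _ => by
          rw [LinearMap.map_smul, hμ, smul_smul]
      have h2 : μ₀ • v = ∑ j, (b.repr v j * μ₀) • b j := by
        conv_lhs => rw [hrepr]
        rw [Finset.smul_sum]
        exact Finset.sum_congr rfl fun j _ => by rw [smul_smul, mul_comm]
      have h3 := h1.symm.trans (hv.trans h2)
      have h5 : ∑ j, ((b.repr v j * μ j - b.repr v j * μ₀) • b j) = 0 := by
        have : ∀ j ∈ Finset.univ, ((b.repr v j * μ j - b.repr v j * μ₀) • b j)
            = (b.repr v j * μ j) • b j - (b.repr v j * μ₀) • b j :=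
          fun j _ => sub_smul _ _ _
        rw [Finset.sum_congr rfl this, Finset.sum_sub_distrib, h3, sub_self]
      have h6 := Fintype.linearIndependent_iff.mp b.linearIndependent _ h5 i
      exact sub_eq_zero.mp h6
    conv_lhs => rw [hrepr]
    conv_rhs => rw [hrepr]
    rw [map_sum, Finset.smul_sum]
    refine Finset.sum_congr rfl fun i _ => ?_
    rw [LinearMap.map_smul, hevalb]
    rcases eq_or_ne (b.repr v i) 0 with h0 | h0
    · rw [h0]; simp
    · have : μ i = μ₀ := by
        have := hcoord i
        exact mul_left_cancel₀ h0 this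
      rw [this, smul_smul, smul_smul, mul_comm]
  refine ⟨σ, ?_, ?_, ?_, ?_, fun z => rfl⟩
  · intro z w
    refine b.ext fun j => ?_
    rw [Module.End.mul_apply, hevalb, hevalb, LinearMap.map_smul, hevalb, smul_smul,
      ← Complex.exp_add, ← add_mul, add_comm z w]
  · refine b.ext fun j => ?_
    rw [hevalb]
    simp
  · refine b.ext fun j => ?_
    rw [hevalb, one_mul, Complex.exp_log (hμ0 j), hμ]
  · intro g hg z
    refine b.ext fun j => ?_
    have hgb : s (g (b j)) = μ j • g (b j) := by
      have := congrArg (fun f : Module.End ℂ (Fin n → ℂ) => f (b j)) hg.eq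
      simp only [Module.End.mul_apply] at this
      rw [this, hμ, LinearMap.map_smul]
    rw [Module.End.mul_apply, Module.End.mul_apply, hevalb, LinearMap.map_smul,
      hevalv z (μ j) (g (b j)) hgb]



noncomputable section

/-- For every n ≥ 1 and every invertible matrix A ∈ GL_n(ℂ), there exists a
C-flow φ of A such that each entry function z ↦ φ(z)_{ij} is differentiable on all of ℂ. -/
theorem exists_analytic_C_flow (n : ℕ) (hn : 1 ≤ n)
    (A : Matrix (Fin n) (Fin n) ℂ) (hA : IsUnit A) :
    ∃ φ : ℂ → Matrix (Fin n) (Fin n) ℂ,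
      (∀ z w : ℂ, φ (z + w) = φ z * φ w) ∧
      φ 0 = 1 ∧
      φ 1 = A ∧
      ∀ i j : Fin n, Differentiable ℂ (fun z : ℂ => φ z i j) := by
  classical
  letI : SeminormedRing (Matrix (Fin n) (Fin n) ℂ) := Matrix.linftyOpSemiNormedRing
  letI : NormedRing (Matrix (Fin n) (Fin n) ℂ) := Matrix.linftyOpNormedRing
  letI : NormedAlgebra ℂ (Matrix (Fin n) (Fin n) ℂ) := Matrix.linftyOpNormedAlgebra
  -- transfer to endomorphisms
  set e : Matrix (Fin n) (Fin n) ℂ ≃ₐ[ℂ] Module.End ℂ (Fin n → ℂ) :=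
    Matrix.toLinAlgEquiv' with he
  obtain ⟨nE, hnEmem, sE, hsEmem, hnil, hss, hsum⟩ :=
    Module.End.exists_isNilpotent_isSemisimple (K := ℂ) (V := Fin n → ℂ) (f := e A)
  have hcsA : Commute (e A) sE := Algebra.commute_of_mem_adjoin_self hsEmem
  have hcnA : Commute (e A) nE := Algebra.commute_of_mem_adjoin_self hnEmem
  have hcsn : Commute sE nE :=
    Algebra.commute_of_mem_adjoin_singleton_of_commute hnEmem hcsA.symm
  -- matrices
  set S : Matrix (Fin n) (Fin n) ℂ := e.symm sE with hSdef
  set Nm : Matrix (Fin n) (Fin n) ℂ := e.symm nE with hNmdef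
  have hA_eq : A = Nm + S := by
    have h := congrArg e.symm hsum
    rwa [AlgEquiv.symm_apply_apply, map_add] at h
  have hSNm : Commute S Nm := hcsn.map e.symm
  have hANm : Commute A Nm := by
    have := hcnA.map e.symm
    rwa [AlgEquiv.symm_apply_apply] at this
  have hNnil : IsNilpotent Nm := hnil.map e.symm
  -- S is invertible
  obtain ⟨uA, huA⟩ := hA
  have hxcomm : Commute (↑uA⁻¹ : Matrix (Fin n) (Fin n) ℂ) Nm := by
    have h1 : Commute (↑uA : Matrix (Fin n) (Fin n) ℂ) Nm := huA ▸ hANm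
    exact h1.units_inv_left
  have hxnil : IsNilpotent ((↑uA⁻¹ : Matrix (Fin n) (Fin n) ℂ) * Nm) :=
    hxcomm.isNilpotent_mul_left hNnil
  have hSfact : S = A * (1 - (↑uA⁻¹ : Matrix (Fin n) (Fin n) ℂ) * Nm) := by
    have h5 : A * ((↑uA⁻¹ : Matrix (Fin n) (Fin n) ℂ) * Nm) = Nm := by
      rw [← mul_assoc, ← huA, Units.mul_inv, one_mul]
    rw [mul_sub, mul_one, h5, hA_eq]
    abel
  have hSunit : IsUnit S := by
    rw [hSfact]
    exact (huA ▸ uA.isUnit).mul hxnil.isUnit_one_sub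
  obtain ⟨uS, huS⟩ := hSunit
  have hsEunit : IsUnit sE := by
    have h1 : IsUnit (e S) := (huS ▸ uS.isUnit).map e
    rwa [hSdef, AlgEquiv.apply_symm_apply] at h1
  -- eigenbasis of sE
  have hsfs := hss.isFinitelySemisimple
  have htop : ⨆ μ : ℂ, sE.eigenspace μ = ⊤ := by
    rw [← Module.End.iSup_maxGenEigenspace_eq_top sE]
    exact iSup_congr fun μ => (hsfs.maxGenEigenspace_eq_eigenspace μ).symm
  set t : Set (Fin n → ℂ) := {v | ∃ μ₀ : ℂ, v ∈ sE.eigenspace μ₀} with ht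
  have hspan : Submodule.span ℂ t = ⊤ := by
    rw [← top_le_iff, ← htop]
    refine iSup_le fun μ₀ v hv => Submodule.subset_span ⟨μ₀, hv⟩
  obtain ⟨bs, hbs_sub, hbs_span, hbs_li⟩ := exists_linearIndependent ℂ t
  rw [hspan] at hbs_span
  let b0 : Module.Basis bs ℂ (Fin n → ℂ) := Module.Basis.mk hbs_li
    (by rw [Subtype.range_coe, hbs_span])
  let eqv : bs ≃ Fin n := b0.indexEquiv (Pi.basisFun ℂ (Fin n))
  let b : Module.Basis (Fin n) ℂ (Fin n → ℂ) := b0.reindex eqv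
  have hbmem : ∀ i, ∃ μ₀ : ℂ, sE (b i) = μ₀ • b i := by
    intro i
    have h1 : (b i : Fin n → ℂ) ∈ t := by
      have h2 : b i = b0 (eqv.symm i) := b0.reindex_apply eqv i
      rw [h2, Module.Basis.mk_apply]
      exact hbs_sub (eqv.symm i).2
    obtain ⟨μ₀, hμ₀⟩ := h1
    exact ⟨μ₀, Module.End.mem_eigenspace_iff.mp hμ₀⟩
  choose μ hμ using hbmem
  have hμ0 : ∀ i, μ i ≠ 0 := by
    intro i h0
    have hb0 : sE (b i) = 0 := by rw [hμ i, h0, zero_smul]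
    obtain ⟨us, hus⟩ := hsEunit
    have h1 : ((↑us⁻¹ * ↑us : Module.End ℂ (Fin n → ℂ))) (b i)
        = (↑us⁻¹ : Module.End ℂ (Fin n → ℂ)) (sE (b i)) := by
      rw [Module.End.mul_apply, hus]
    rw [hb0, map_zero, Units.inv_mul] at h1
    exact b.ne_zero i (by simpa using h1)
  obtain ⟨σ, hσhom, hσ0, hσ1, hσcomm, hσform⟩ := flow_of_eigenbasis sE b μ hμ hμ0
  -- the unipotent part
  set N : Matrix (Fin n) (Fin n) ℂ := (↑uS⁻¹ : Matrix (Fin n) (Fin n) ℂ) * Nm with hNdef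
  have huSNm : Commute (↑uS⁻¹ : Matrix (Fin n) (Fin n) ℂ) Nm := (huS ▸ hSNm).units_inv_left
  have hNnil' : IsNilpotent N := huSNm.isNilpotent_mul_left hNnil
  obtain ⟨m, hm⟩ := hNnil'
  set L : Matrix (Fin n) (Fin n) ℂ :=
    ∑ k ∈ range m, (((-1 : ℂ) ^ k / (k + 1)) • N ^ (k + 1)) with hLdef
  have hexpL : exp L = 1 + N := exp_nilpotent_log hm
  have hLm : L ^ m = 0 := by
    have hfac : L = N * (∑ k ∈ range m, (((-1 : ℂ) ^ k / (k + 1)) • N ^ k)) := by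
      rw [hLdef, mul_sum]
      exact sum_congr rfl fun k _ => by rw [mul_smul_comm, ← pow_succ']
    have hcNQ : Commute N (∑ k ∈ range m, (((-1 : ℂ) ^ k / (k + 1)) • N ^ k)) :=
      Commute.sum_right _ _ _ fun k _ => ((Commute.refl N).pow_right k).smul_right _
    rw [hfac, hcNQ.mul_pow, hm, zero_mul]
  -- the two flows
  set Sg : ℂ → Matrix (Fin n) (Fin n) ℂ := fun z => e.symm (σ z) with hSgdef
  set Up : ℂ → Matrix (Fin n) (Fin n) ℂ := fun z => exp (z • L) with hUpdef
  -- commutation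
  have hcsEeN : Commute sE (e N) := by
    have h1 : e N = (e ↑uS⁻¹) * nE := by
      rw [hNdef, map_mul, hNmdef, AlgEquiv.apply_symm_apply]
    have h2 : Commute sE (e ↑uS⁻¹) := by
      have h3 : Commute S (↑uS⁻¹ : Matrix (Fin n) (Fin n) ℂ) :=
        huS ▸ (Commute.refl _).units_inv_right
      have h4 := h3.map e
      rwa [hSdef, AlgEquiv.apply_symm_apply] at h4
    rw [h1]
    exact h2.mul_right hcsn
  have hSgN : ∀ w, Commute (Sg w) N := by
    intro w
    have h1 := (hσcomm (e N) hcsEeN w).map e.symm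
    rwa [AlgEquiv.symm_apply_apply] at h1
  have hSgL : ∀ w, Commute (Sg w) L :=
    fun w => Commute.sum_right _ _ _ (fun k _ => ((hSgN w).pow_right (k + 1)).smul_right _)
  have hglob : ∀ w z, Commute (Sg w) (Up z) :=
    fun w z => ((hSgL w).smul_right z).exp_right
  -- entry differentiability
  have hdSg : ∀ i k, Differentiable ℂ (fun z => Sg z i k) := by
    intro i k
    have h1 : (fun z => Sg z i k) = fun z => ∑ l, Complex.exp (z * Complex.log (μ l)) *
        ((e.symm (LinearMap.toSpanSingleton ℂ _ (b l) ∘ₗ b.coord l)) i k) := by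
      funext z
      simp only [hSgdef]
      rw [hσform z, map_sum]
      rw [show (∑ l, e.symm (Complex.exp (z * Complex.log (μ l)) •
          (LinearMap.toSpanSingleton ℂ _ (b l) ∘ₗ b.coord l)))
        = ∑ l, Complex.exp (z * Complex.log (μ l)) •
          e.symm (LinearMap.toSpanSingleton ℂ _ (b l) ∘ₗ b.coord l) from
        Finset.sum_congr rfl fun l _ => map_smul _ _ _]
      simp [Matrix.sum_apply]
    rw [h1]
    exact Differentiable.fun_sum fun l _ =>
      (Complex.differentiable_exp.comp (differentiable_id.mul_const _)).mul_const _
  have hUpeval : ∀ z, Up z = ∑ p ∈ range (m + 1), (z ^ p * (p.factorial : ℂ)⁻¹) • L ^ p := by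
    intro z
    have hzL : (z • L) ^ m = 0 := by rw [smul_pow, hLm, smul_zero]
    simp only [hUpdef]
    rw [show exp (z • L) = _ from exp_eq_sum_of_pow_eq_zero hzL]
    refine Finset.sum_congr rfl fun p _ => ?_
    rw [smul_pow, smul_smul, mul_comm]
  have hdUp : ∀ k j, Differentiable ℂ (fun z => Up z k j) := by
    intro k j
    have h1 : (fun z => Up z k j) = fun z =>
        ∑ p ∈ range (m + 1), (z ^ p * (p.factorial : ℂ)⁻¹) * ((L ^ p) k j) := by
      funext z
      rw [hUpeval z]
      simp [Matrix.sum_apply]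
    rw [h1]
    exact Differentiable.fun_sum fun p _ =>
      ((differentiable_pow p).mul_const _).mul_const _
  -- assemble
  refine ⟨fun z => Sg z * Up z, ?_, ?_, ?_, ?_⟩
  · intro z w
    show Sg (z + w) * Up (z + w) = (Sg z * Up z) * (Sg w * Up w)
    have hSghom : Sg (z + w) = Sg z * Sg w := by
      simp only [hSgdef]; rw [hσhom z w, map_mul]
    have hUphom : Up (z + w) = Up z * Up w := by
      simp only [hUpdef]
      rw [add_smul]
      letI : NormedAlgebra ℚ (Matrix (Fin n) (Fin n) ℂ) :=
        NormedAlgebra.restrictScalars ℚ ℂ (Matrix (Fin n) (Fin n) ℂ)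
      exact exp_add_of_commute (((Commute.refl L).smul_left z).smul_right w)
    rw [hSghom, hUphom, mul_assoc, ← mul_assoc (Sg w), (hglob w z).eq, mul_assoc, ← mul_assoc]
  · show Sg 0 * Up 0 = 1
    have h0Sg : Sg 0 = 1 := by simp only [hSgdef]; rw [hσ0, map_one]
    have h0Up : Up 0 = 1 := by simp only [hUpdef]; rw [zero_smul, exp_zero]
    rw [h0Sg, h0Up, one_mul]
  · show Sg 1 * Up 1 = A
    have h1Sg : Sg 1 = S := by simp only [hSgdef]; rw [hσ1]
    have h1Up : Up 1 = 1 + N := by simp only [hUpdef]; rw [one_smul, hexpL]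
    rw [h1Sg, h1Up, mul_add, mul_one, hNdef, ← mul_assoc]
    have h6 : S * (↑uS⁻¹ : Matrix (Fin n) (Fin n) ℂ) = 1 := by rw [← huS, Units.mul_inv]
    rw [h6, one_mul, hA_eq, add_comm]
  · intro i j
    show Differentiable ℂ (fun z => (Sg z * Up z) i j)
    have h2 : (fun z => (Sg z * Up z) i j) = fun z => ∑ k, Sg z i k * Up z k j := by
      funext z; rw [Matrix.mul_apply]
    rw [h2]
    exact Differentiable.fun_sum fun k _ => (hdSg i k).mul (hdUp k j)

end
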